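/- For 1 ≤ m ≤ n, the number of equivalence classes of pairs (c, B), where B is a Boolean subalgebra of Finset (Fin n) with exactly m atoms and c ∈ Finset (Fin n), under the equivalence (c, B) ~ (c', B') iff B = B' and the symmetric difference c Δ c' belongs to B, equals 2^{n−m} · S(n, m), where S(n, m) is the Stirling number of the second kind. -/

import Mathlib

open scoped symmDiff

/-- Stirling numbers of the second kind. -/
def stirling2 : ℕ → ℕ → ℕ
  | 0, 0 => 1
  | 0, _ + 1 => 0
  | _ + 1, 0 => 0
  | n + 1, m + 1 => (m + 1) * stirling2 n (m + 1) + stirling2 n m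

/-- A Boolean subalgebra of `Finset (Fin n)`. -/
def IsBoolSub {n : ℕ} (B : Set (Finset (Fin n))) : Prop :=
  ∅ ∈ B ∧ Finset.univ ∈ B ∧ (∀ x ∈ B, ∀ y ∈ B, x ∪ y ∈ B) ∧
    (∀ x ∈ B, ∀ y ∈ B, x ∩ y ∈ B) ∧ (∀ x ∈ B, xᶜ ∈ B)

/-- The atoms of a Boolean subalgebra `B` of `Finset (Fin n)`. -/
def atomsOf {n : ℕ} (B : Set (Finset (Fin n))) : Set (Finset (Fin n)) :=
  {x | x ∈ B ∧ x ≠ ∅ ∧ ∀ y ∈ B, y ≠ ∅ → y ⊆ x → y = x}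

open Classical

variable {n : ℕ}

/-- saturated sets of a setoid -/
def satB (s : Setoid (Fin n)) : Set (Finset (Fin n)) :=
  {x | ∀ i j, s.r i j → (i ∈ x ↔ j ∈ x)}

lemma isBoolSub_satB (s : Setoid (Fin n)) : IsBoolSub (satB s) := by
  refine ⟨fun i j _ => by simp, fun i j _ => by simp, ?_, ?_, ?_⟩
  · intro x hx y hy i j hij
    simp only [Finset.mem_union]
    rw [hx i j hij, hy i j hij]
  · intro x hx y hy i j hij
    simp only [Finset.mem_inter]
    rw [hx i j hij, hy i j hij]
  · intro x hx i j hij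
    simp only [Finset.mem_compl]
    rw [hx i j hij]

noncomputable def clsF (s : Setoid (Fin n)) (i : Fin n) : Finset (Fin n) :=
  Finset.univ.filter (fun j => s.r i j)

lemma mem_clsF {s : Setoid (Fin n)} {i j : Fin n} : j ∈ clsF s i ↔ s.r i j := by
  simp [clsF]

lemma self_mem_clsF {s : Setoid (Fin n)} (i : Fin n) : i ∈ clsF s i :=
  mem_clsF.2 (s.refl i)

lemma clsF_mem_satB (s : Setoid (Fin n)) (i : Fin n) : clsF s i ∈ satB s := by
  intro j k hjk
  simp only [mem_clsF]
  exact ⟨fun h => s.trans h hjk, fun h => s.trans h (s.symm hjk)⟩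

lemma clsF_eq_of_rel {s : Setoid (Fin n)} {i j : Fin n} (h : s.r i j) :
    clsF s i = clsF s j := by
  ext k; simp only [mem_clsF]
  exact ⟨fun h' => s.trans (s.symm h) h', fun h' => s.trans h h'⟩

lemma satB_injective : Function.Injective (satB (n := n)) := by
  intro s t h
  ext i j
  constructor
  · intro hij
    have ht := clsF_mem_satB t i
    rw [← h] at ht
    exact mem_clsF.1 ((ht i j hij).1 (self_mem_clsF i))
  · intro hij
    have hs := clsF_mem_satB s i
    rw [h] at hs
    exact mem_clsF.1 ((hs i j hij).1 (self_mem_clsF i))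

/-- the setoid associated to a set of finsets -/
def setoidOf (B : Set (Finset (Fin n))) : Setoid (Fin n) :=
  ⟨fun i j => ∀ x ∈ B, (i ∈ x ↔ j ∈ x),
   ⟨fun _ _ _ => Iff.rfl, fun h x hx => (h x hx).symm,
    fun h h' x hx => (h x hx).trans (h' x hx)⟩⟩

lemma satB_setoidOf {B : Set (Finset (Fin n))} (hB : IsBoolSub B) :
    satB (setoidOf B) = B := by
  obtain ⟨h0, h1, hu, hi, hc⟩ := hB
  apply Set.eq_of_subset_of_subset
  · -- hard direction: saturated sets are in B
    intro x hx
    -- atom of i : intersection of all members of B containing i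
    set Bf := (Set.toFinite B).toFinset with hBf
    set A : Fin n → Finset (Fin n) := fun i => (Bf.filter (fun y => i ∈ y)).inf id with hA
    have memA : ∀ i j, j ∈ A i ↔ ∀ y ∈ B, i ∈ y → j ∈ y := by
      intro i j
      simp only [hA, Finset.mem_inf, Finset.mem_filter, Set.Finite.mem_toFinset, id, hBf]
      constructor
      · intro h y hy hiy; exact h y ⟨hy, hiy⟩
      · rintro h y ⟨hy, hiy⟩; exact h y hy hiy
    have memA' : ∀ i j, j ∈ A i ↔ (setoidOf B).r i j := by
      intro i j
      rw [memA]
      constructor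
      · intro h y hy
        refine ⟨h y hy, fun hj => ?_⟩
        by_contra hi'
        have := h yᶜ (hc y hy) (Finset.mem_compl.2 hi')
        exact (Finset.mem_compl.1 this) hj
      · intro h y hy hiy; exact (h y hy).1 hiy
    have Amem : ∀ i, A i ∈ B := by
      intro i
      have key : ∀ F : Finset (Finset (Fin n)), ↑F ⊆ B → F.inf id ∈ B := by
        intro F
        induction F using Finset.induction_on with
        | empty => intro _; simpa [Finset.top_eq_univ] using h1
        | insert _ _ hnot ih =>
          intro hsub
          rw [Finset.coe_insert, Set.insert_subset_iff] at hsub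
          rw [Finset.inf_insert]
          exact hi _ hsub.1 _ (ih hsub.2)
      refine key _ ?_
      intro y hy
      simp only [Finset.coe_filter, Set.mem_setOf_eq, Set.Finite.mem_toFinset, hBf] at hy
      exact hy.1
    -- x is the union of the A i for i ∈ x
    have hxeq : x = x.sup A := by
      ext j
      rw [Finset.mem_sup]
      constructor
      · intro hj; exact ⟨j, hj, (memA' j j).2 ((setoidOf B).refl j)⟩
      · rintro ⟨i, hi', hji⟩
        exact (hx i j ((memA' i j).1 hji)).1 hi'
    have supmem : ∀ F : Finset (Fin n), F.sup A ∈ B := by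
      intro F
      induction F using Finset.induction_on with
      | empty => simpa [Finset.bot_eq_empty] using h0
      | insert _ _ hnot ih =>
        rw [Finset.sup_insert]
        exact hu _ (Amem _) _ ih
    rw [hxeq]; exact supmem x
  · intro x hx i j hij
    exact hij x hx

lemma atomsOf_satB (s : Setoid (Fin n)) : atomsOf (satB s) = Set.range (clsF s) := by
  ext x
  constructor
  · rintro ⟨hxB, hxne, hmin⟩
    obtain ⟨i, hi⟩ := Finset.nonempty_iff_ne_empty.2 hxne
    refine ⟨i, ?_⟩
    have hsub : clsF s i ⊆ x := by
      intro j hj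
      exact (hxB i j (mem_clsF.1 hj)).1 hi
    have : clsF s i ≠ ∅ := Finset.nonempty_iff_ne_empty.1 ⟨i, self_mem_clsF i⟩
    exact hmin _ (clsF_mem_satB s i) this hsub
  · rintro ⟨i, rfl⟩
    refine ⟨clsF_mem_satB s i, Finset.nonempty_iff_ne_empty.1 ⟨i, self_mem_clsF i⟩, ?_⟩
    intro y hyB hyne hysub
    obtain ⟨j, hj⟩ := Finset.nonempty_iff_ne_empty.2 hyne
    have hij : s.r i j := mem_clsF.1 (hysub hj)
    apply Finset.Subset.antisymm hysub
    intro k hk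
    have hik : s.r i k := mem_clsF.1 hk
    exact (hyB j k (s.trans (s.symm hij) hik)).1 hj

noncomputable def quotEquivAtoms (s : Setoid (Fin n)) :
    Quotient s ≃ Set.range (clsF s) := by
  refine Equiv.ofBijective
    (Quotient.lift (fun i => (⟨clsF s i, Set.mem_range_self i⟩ : Set.range (clsF s)))
      (fun i j hij => Subtype.ext (clsF_eq_of_rel hij))) ⟨?_, ?_⟩
  · rintro ⟨i⟩ ⟨j⟩ h
    have : clsF s i = clsF s j := congrArg Subtype.val h
    have : j ∈ clsF s i := this ▸ self_mem_clsF j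
    exact Quotient.sound (mem_clsF.1 this)
  · rintro ⟨x, i, rfl⟩
    exact ⟨⟦i⟧, rfl⟩

lemma ncard_atomsOf_satB (s : Setoid (Fin n)) :
    (atomsOf (satB s)).ncard = Nat.card (Quotient s) := by
  rw [atomsOf_satB, ← Nat.card_coe_set_eq]
  exact (Nat.card_congr (quotEquivAtoms s)).symm


instance {k : ℕ} : Finite (Setoid (Fin k)) :=
  Finite.of_injective (fun s x y => s.r x y)
    (fun a b h => Setoid.ext (fun x y => iff_of_eq (congrFun (congrFun h x) y)))

variable {n : ℕ}

def resS (s : Setoid (Fin (n + 1))) : Setoid (Fin n) := Setoid.comap Fin.castSucc s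

noncomputable def xS (s : Setoid (Fin (n + 1))) : Option (Quotient (resS s)) :=
  if h : ∃ i : Fin n, s.r i.castSucc (Fin.last n) then some ⟦Classical.choose h⟧ else none

def gS (t : Setoid (Fin n)) (x : Option (Quotient t)) (a : Fin (n + 1)) : Option (Quotient t) :=
  Fin.lastCases x (fun i => some ⟦i⟧) a

@[simp] lemma gS_last (t : Setoid (Fin n)) (x : Option (Quotient t)) :
    gS t x (Fin.last n) = x := Fin.lastCases_last

@[simp] lemma gS_castSucc (t : Setoid (Fin n)) (x : Option (Quotient t)) (i : Fin n) :
    gS t x i.castSucc = some ⟦i⟧ := Fin.lastCases_castSucc i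

def extS (t : Setoid (Fin n)) (x : Option (Quotient t)) : Setoid (Fin (n + 1)) :=
  Setoid.ker (gS t x)

lemma extS_rel (t : Setoid (Fin n)) (x : Option (Quotient t)) (a b : Fin (n + 1)) :
    (extS t x).r a b ↔ gS t x a = gS t x b := Iff.rfl

lemma res_ext (t : Setoid (Fin n)) (x : Option (Quotient t)) : resS (extS t x) = t := by
  apply Setoid.ext
  intro i j
  show (extS t x).r i.castSucc j.castSucc ↔ t.r i j
  rw [extS_rel]
  simp only [gS_castSucc, Option.some_inj, Quotient.eq]
  try rfl

lemma rel_last_extS_some (t : Setoid (Fin n)) (c : Quotient t) (i : Fin n) :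
    (extS t (some c)).r i.castSucc (Fin.last n) ↔ (⟦i⟧ : Quotient t) = c := by
  rw [extS_rel]
  simp

lemma rel_last_extS_none (t : Setoid (Fin n)) (i : Fin n) :
    ¬ (extS t none).r i.castSucc (Fin.last n) := by
  rw [extS_rel]
  simp

lemma ext_res (s : Setoid (Fin (n + 1))) : extS (resS s) (xS s) = s := by
  apply Setoid.ext
  intro a b
  induction a using Fin.lastCases with
  | last =>
    induction b using Fin.lastCases with
    | last => exact ⟨fun _ => s.iseqv.refl _, fun _ => rfl⟩
    | cast j =>
      rw [extS_rel, gS_last, gS_castSucc]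
      unfold xS
      split_ifs with h
      · simp only [Option.some_inj, Quotient.eq]
        have hc := Classical.choose_spec h
        constructor
        · intro h'
          exact s.iseqv.trans (s.iseqv.symm hc) (show s.r _ _ from h')
        · intro h'
          exact s.iseqv.trans hc h' 
      · constructor
        · intro h'; exact absurd h' (by simp)
        · intro h'; exact absurd ⟨j, s.iseqv.symm h'⟩ h
  | cast i =>
    induction b using Fin.lastCases with
    | last =>
      rw [extS_rel, gS_last, gS_castSucc]
      unfold xS
      split_ifs with h
      · simp only [Option.some_inj, Quotient.eq]
        have hc := Classical.choose_spec h
        constructor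
        · intro h'
          exact s.iseqv.trans (show s.r _ _ from h') hc
        · intro h'
          exact s.iseqv.trans h' (s.iseqv.symm hc)
      · constructor
        · intro h'; exact absurd h' (by simp)
        · intro h'; exact absurd ⟨i, h'⟩ h
    | cast j =>
      rw [extS_rel]
      simp only [gS_castSucc, Option.some_inj, Quotient.eq]
      try rfl

def hS (t : Setoid (Fin n)) (c : Quotient t) (a : Fin (n + 1)) : Quotient t :=
  Fin.lastCases c (fun i => ⟦i⟧) a

@[simp] lemma hS_last (t : Setoid (Fin n)) (c : Quotient t) :
    hS t c (Fin.last n) = c := Fin.lastCases_last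

@[simp] lemma hS_castSucc (t : Setoid (Fin n)) (c : Quotient t) (i : Fin n) :
    hS t c i.castSucc = ⟦i⟧ := Fin.lastCases_castSucc i

lemma gS_eq_some_comp (t : Setoid (Fin n)) (c : Quotient t) :
    gS t (some c) = fun a => some (hS t c a) := by
  funext a
  induction a using Fin.lastCases with
  | last => simp
  | cast i => simp

lemma card_ext_some (t : Setoid (Fin n)) (c : Quotient t) :
    Nat.card (Quotient (extS t (some c))) = Nat.card (Quotient t) := by
  have hker : extS t (some c) = Setoid.ker (hS t c) := by
    apply Setoid.ext
    intro a b
    rw [extS_rel, gS_eq_some_comp]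
    show some _ = some _ ↔ Setoid.ker _ a b
    rw [Setoid.ker_def, Option.some_inj]
  rw [hker]
  have hsurj : Function.Surjective (hS t c) := by
    intro q
    induction q using Quotient.ind with
    | _ i => exact ⟨i.castSucc, by simp⟩
  exact Nat.card_congr (Setoid.quotientKerEquivOfSurjective _ hsurj)

lemma card_ext_none (t : Setoid (Fin n)) :
    Nat.card (Quotient (extS t none)) = Nat.card (Quotient t) + 1 := by
  have hsurj : Function.Surjective (gS t none) := by
    intro o
    match o with
    | none => exact ⟨Fin.last n, by simp⟩
    | some q =>
      induction q using Quotient.ind with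
      | _ i => exact ⟨i.castSucc, by simp⟩
  have := Nat.card_congr (Setoid.quotientKerEquivOfSurjective _ hsurj)
  rw [show Setoid.ker (gS t none) = extS t none from rfl] at this
  rw [this]
  rw [Nat.card_congr (Equiv.optionEquivSumPUnit.{0, 0} (Quotient t)), Nat.card_sum]
  simp

instance {k : ℕ} (s : Setoid (Fin k)) : Finite (Quotient s) := Quotient.finite s

noncomputable def splitEquiv (n m : ℕ) :
    ((Σ t : {t : Setoid (Fin n) // Nat.card (Quotient t) = m + 1}, Quotient t.1) ⊕
      {t : Setoid (Fin n) // Nat.card (Quotient t) = m}) ≃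
    {s : Setoid (Fin (n + 1)) // Nat.card (Quotient s) = m + 1} := by
  refine Equiv.ofBijective (Sum.elim
    (fun p => ⟨extS p.1.1 (some p.2), by rw [card_ext_some]; exact p.1.2⟩)
    (fun t => ⟨extS t.1 none, by rw [card_ext_none, t.2]⟩)) ⟨?_, ?_⟩
  · rintro (⟨⟨t, ht⟩, c⟩ | ⟨t, ht⟩) (⟨⟨t', ht'⟩, c'⟩ | ⟨t', ht'⟩) h <;>
      simp only [Sum.elim_inl, Sum.elim_inr, Subtype.mk.injEq] at h
    · have htt : t = t' := by
        have := congrArg resS h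
        rwa [res_ext, res_ext] at this
      subst htt
      obtain ⟨i, hi⟩ := Quotient.exists_rep c
      have h1 : (extS t (some c)).r i.castSucc (Fin.last n) :=
        (rel_last_extS_some t c i).2 hi
      rw [h] at h1
      have h2 : (⟦i⟧ : Quotient t) = c' := (rel_last_extS_some t c' i).1 h1
      have : c = c' := hi ▸ h2
      subst this
      rfl
    · obtain ⟨i, hi⟩ := Quotient.exists_rep c
      have h1 : (extS t (some c)).r i.castSucc (Fin.last n) :=
        (rel_last_extS_some t c i).2 hi
      rw [h] at h1
      exact absurd h1 (rel_last_extS_none t' i)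
    · obtain ⟨i, hi⟩ := Quotient.exists_rep c'
      have h1 : (extS t' (some c')).r i.castSucc (Fin.last n) :=
        (rel_last_extS_some t' c' i).2 hi
      rw [← h] at h1
      exact absurd h1 (rel_last_extS_none t i)
    · have htt : t = t' := by
        have := congrArg resS h
        rwa [res_ext, res_ext] at this
      subst htt
      rfl
  · rintro ⟨s, hs⟩
    by_cases h : ∃ i : Fin n, s.r i.castSucc (Fin.last n)
    · have hx : xS s = some ⟦Classical.choose h⟧ := dif_pos h
      have he : extS (resS s) (some ⟦Classical.choose h⟧) = s := by
        rw [← hx]; exact ext_res s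
      have hcard : Nat.card (Quotient (resS s)) = m + 1 := by
        rw [← card_ext_some (resS s) ⟦Classical.choose h⟧, he, hs]
      exact ⟨Sum.inl ⟨⟨resS s, hcard⟩, ⟦Classical.choose h⟧⟩, Subtype.ext he⟩
    · have hx : xS s = none := dif_neg h
      have he : extS (resS s) none = s := by rw [← hx]; exact ext_res s
      have hcard : Nat.card (Quotient (resS s)) = m := by
        have : Nat.card (Quotient (resS s)) + 1 = m + 1 := by
          rw [← card_ext_none (resS s), he, hs]
        exact Nat.succ_injective this
      exact ⟨Sum.inr ⟨resS s, hcard⟩, Subtype.ext he⟩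

lemma card_setoids (n m : ℕ) :
    Nat.card {s : Setoid (Fin n) // Nat.card (Quotient s) = m} = stirling2 n m := by
  induction n generalizing m with
  | zero =>
    have hall : ∀ s : Setoid (Fin 0), Nat.card (Quotient s) = 0 := fun s => by
      haveI : IsEmpty (Quotient s) :=
        ⟨fun q => Quotient.ind (motive := fun _ => False) (fun i => i.elim0) q⟩
      exact Nat.card_of_isEmpty
    match m with
    | 0 =>
      haveI : Unique {s : Setoid (Fin 0) // Nat.card (Quotient s) = 0} :=
        { default := ⟨⊤, hall ⊤⟩,
          uniq := fun a => Subtype.ext (Setoid.ext fun x => x.elim0) }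
      rw [show stirling2 0 0 = 1 from rfl]
      exact Nat.card_unique
    | m + 1 =>
      haveI : IsEmpty {s : Setoid (Fin 0) // Nat.card (Quotient s) = m + 1} :=
        ⟨fun a => by have := a.2; rw [hall a.1] at this; exact absurd this (by simp)⟩
      simp [Nat.card_of_isEmpty, stirling2]
  | succ n ih =>
    match m with
    | 0 =>
      haveI : IsEmpty {s : Setoid (Fin (n + 1)) // Nat.card (Quotient s) = 0} := by
        refine ⟨fun a => ?_⟩
        have h1 : Nat.card (Quotient a.1) ≠ 0 := Nat.card_pos.ne'
        exact h1 a.2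
      simp [Nat.card_of_isEmpty, stirling2]
    | m + 1 =>
      rw [← Nat.card_congr (splitEquiv n m), Nat.card_sum]
      have hsig : Nat.card
          (Σ t : {t : Setoid (Fin n) // Nat.card (Quotient t) = m + 1}, Quotient t.1) =
          Nat.card {t : Setoid (Fin n) // Nat.card (Quotient t) = m + 1} * (m + 1) := by
        rw [Nat.card_congr ((Equiv.sigmaCongrRight
          (fun t => Finite.equivFinOfCardEq t.2)).trans (Equiv.sigmaEquivProd _ _))]
        rw [Nat.card_prod]
        simp [Nat.card_eq_fintype_card]
      rw [hsig, ih, ih]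
      show stirling2 n (m + 1) * (m + 1) + stirling2 n m = stirling2 (n + 1) (m + 1)
      rw [show stirling2 (n + 1) (m + 1) = (m + 1) * stirling2 n (m + 1) + stirling2 n m
        from rfl]
      ring

/-! ### Transversals and normalization -/

noncomputable def TrF (s : Setoid (Fin n)) : Finset (Fin n) :=
  Finset.univ.filter (fun i => (⟦i⟧ : Quotient s).out = i)

lemma rel_out (s : Setoid (Fin n)) (i : Fin n) : s.r i (⟦i⟧ : Quotient s).out :=
  Quotient.exact (Quotient.out_eq _).symm

lemma out_mem_TrF (s : Setoid (Fin n)) (i : Fin n) : (⟦i⟧ : Quotient s).out ∈ TrF s := by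
  simp only [TrF, Finset.mem_filter, Finset.mem_univ, true_and]
  exact congrArg Quotient.out (Quotient.out_eq _)

lemma mem_TrF_out {s : Setoid (Fin n)} {t : Fin n} (ht : t ∈ TrF s) :
    (⟦t⟧ : Quotient s).out = t := by
  simpa [TrF] using ht

lemma card_TrF (s : Setoid (Fin n)) : (TrF s).card = Nat.card (Quotient s) := by
  have e : {i // i ∈ TrF s} ≃ Quotient s :=
    { toFun := fun x => ⟦x.1⟧
      invFun := fun q => ⟨q.out, by
        simp only [TrF, Finset.mem_filter, Finset.mem_univ, true_and]
        exact congrArg Quotient.out (Quotient.out_eq q)⟩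
      left_inv := fun x => Subtype.ext (mem_TrF_out x.2)
      right_inv := fun q => Quotient.out_eq q }
  rw [← Fintype.card_coe, ← Nat.card_eq_fintype_card]
  exact Nat.card_congr e

lemma symmDiff_mem_satB {s : Setoid (Fin n)} {x y : Finset (Fin n)}
    (hx : x ∈ satB s) (hy : y ∈ satB s) : x ∆ y ∈ satB s := by
  intro i j hij
  simp only [Finset.mem_symmDiff]
  rw [hx i j hij, hy i j hij]

lemma symmDiff_mem_isBoolSub {B : Set (Finset (Fin n))} (hB : IsBoolSub B)
    {x y : Finset (Fin n)} (hx : x ∈ B) (hy : y ∈ B) : x ∆ y ∈ B := by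
  obtain ⟨h0, h1, hu, hi, hc⟩ := hB
  have : x ∆ y = (x ∩ yᶜ) ∪ (y ∩ xᶜ) := by
    ext a
    simp only [Finset.mem_symmDiff, Finset.mem_union, Finset.mem_inter, Finset.mem_compl]
  rw [this]
  exact hu _ (hi _ hx _ (hc _ hy)) _ (hi _ hy _ (hc _ hx))

noncomputable def NmF (s : Setoid (Fin n)) (c : Finset (Fin n)) : Finset (Fin n) :=
  c ∆ Finset.univ.filter (fun j => (⟦j⟧ : Quotient s).out ∈ c)

lemma filter_mem_satB (s : Setoid (Fin n)) (c : Finset (Fin n)) :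
    Finset.univ.filter (fun j => (⟦j⟧ : Quotient s).out ∈ c) ∈ satB s := by
  intro i j hij
  simp only [Finset.mem_filter, Finset.mem_univ, true_and]
  rw [Quotient.sound hij]

lemma symmDiff_NmF_mem (s : Setoid (Fin n)) (c : Finset (Fin n)) :
    c ∆ NmF s c ∈ satB s := by
  rw [NmF, symmDiff_symmDiff_cancel_left]
  exact filter_mem_satB s c

lemma NmF_avoids (s : Setoid (Fin n)) (c : Finset (Fin n)) :
    ∀ t ∈ TrF s, t ∉ NmF s c := by
  intro t ht
  have hout := mem_TrF_out ht
  simp only [NmF, Finset.mem_symmDiff, Finset.mem_filter, Finset.mem_univ, true_and, hout]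
  tauto

lemma satB_avoids_empty {s : Setoid (Fin n)} {d : Finset (Fin n)}
    (hd : d ∈ satB s) (h : ∀ t ∈ TrF s, t ∉ d) : d = ∅ := by
  by_contra hne
  obtain ⟨j, hj⟩ := Finset.nonempty_iff_ne_empty.2 hne
  have : (⟦j⟧ : Quotient s).out ∈ d := (hd j _ (rel_out s j)).1 hj
  exact h _ (out_mem_TrF s j) this

lemma symmDiff_juggle (a b x y : Finset (Fin n)) :
    ((x ∆ a) ∆ (x ∆ y)) ∆ (y ∆ b) = a ∆ b := by
  rw [symmDiff_comm x a, symmDiff_assoc, symmDiff_assoc x y, symmDiff_symmDiff_cancel_left,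
    symmDiff_assoc, symmDiff_symmDiff_cancel_left]

lemma NmF_eq_of_rel {s : Setoid (Fin n)} {c c' : Finset (Fin n)}
    (h : c ∆ c' ∈ satB s) : NmF s c = NmF s c' := by
  have hd : NmF s c ∆ NmF s c' ∈ satB s := by
    have heq : NmF s c ∆ NmF s c' = ((c ∆ NmF s c) ∆ (c ∆ c')) ∆ (c' ∆ NmF s c') :=
      (symmDiff_juggle _ _ _ _).symm
    rw [heq]
    exact symmDiff_mem_satB (symmDiff_mem_satB (symmDiff_NmF_mem s c) h)
      (symmDiff_NmF_mem s c')
  have hav : ∀ t ∈ TrF s, t ∉ NmF s c ∆ NmF s c' := by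
    intro t ht
    simp only [Finset.mem_symmDiff]
    have h1 := NmF_avoids s c t ht
    have h2 := NmF_avoids s c' t ht
    tauto
  have := satB_avoids_empty hd hav
  rwa [← Finset.bot_eq_empty, symmDiff_eq_bot] at this

lemma rel_of_NmF_eq {s : Setoid (Fin n)} {c c' : Finset (Fin n)}
    (h : NmF s c = NmF s c') : c ∆ c' ∈ satB s := by
  have heq : c ∆ c' = (c ∆ NmF s c) ∆ (NmF s c' ∆ c') := by
    rw [h, symmDiff_assoc, symmDiff_symmDiff_cancel_left]
  rw [heq]
  refine symmDiff_mem_satB (symmDiff_NmF_mem s c) ?_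
  rw [symmDiff_comm]
  exact symmDiff_NmF_mem s c'

lemma NmF_fixed {s : Setoid (Fin n)} {c : Finset (Fin n)}
    (h : ∀ t ∈ TrF s, t ∉ c) : NmF s c = c := by
  have hd : c ∆ NmF s c ∈ satB s := symmDiff_NmF_mem s c
  have hav : ∀ t ∈ TrF s, t ∉ c ∆ NmF s c := by
    intro t ht
    simp only [Finset.mem_symmDiff]
    have h1 := NmF_avoids s c t ht
    have h2 := h t ht
    tauto
  have := satB_avoids_empty hd hav
  rw [← Finset.bot_eq_empty, symmDiff_eq_bot] at this
  exact this.symm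

lemma setoidOf_satB (s : Setoid (Fin n)) : setoidOf (satB s) = s :=
  satB_injective (satB_setoidOf (isBoolSub_satB s))

/-! ### Final assembly -/

def Good (n m : ℕ) (p : Finset (Fin n) × Set (Finset (Fin n))) : Prop :=
  IsBoolSub p.2 ∧ (atomsOf p.2).ncard = m

def clS (n m : ℕ) (p : Finset (Fin n) × Set (Finset (Fin n))) :
    Set (Finset (Fin n) × Set (Finset (Fin n))) :=
  {q | Good n m q ∧ p.2 = q.2 ∧ p.1 ∆ q.1 ∈ p.2}

def bigT (n m : ℕ) : Set (Set (Finset (Fin n) × Set (Finset (Fin n)))) :=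
  {S | ∃ p, Good n m p ∧ S = clS n m p}

lemma good_card {m : ℕ} {p : Finset (Fin n) × Set (Finset (Fin n))} (hp : Good n m p) :
    Nat.card (Quotient (setoidOf p.2)) = m := by
  have h := ncard_atomsOf_satB (setoidOf p.2)
  rw [satB_setoidOf hp.1] at h
  rw [← h]
  exact hp.2

lemma self_mem_clS {m : ℕ} {p : Finset (Fin n) × Set (Finset (Fin n))} (hp : Good n m p) :
    p ∈ clS n m p := by
  refine ⟨hp, rfl, ?_⟩
  rw [symmDiff_self, Finset.bot_eq_empty]
  exact hp.1.1

lemma clS_eq {m : ℕ} {p p' : Finset (Fin n) × Set (Finset (Fin n))}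
    (hp : Good n m p) (hB : p.2 = p'.2) (hrel : p.1 ∆ p'.1 ∈ p.2) :
    clS n m p = clS n m p' := by
  ext q
  simp only [clS, Set.mem_setOf_eq]
  constructor
  · rintro ⟨hq, hBq, hr⟩
    refine ⟨hq, hB ▸ hBq, ?_⟩
    have heq : p'.1 ∆ q.1 = (p.1 ∆ p'.1) ∆ (p.1 ∆ q.1) := by
      rw [← symmDiff_assoc, symmDiff_comm (p.1 ∆ p'.1) p.1, ← symmDiff_assoc,
        symmDiff_self, bot_symmDiff]
    rw [← hB, heq]
    exact symmDiff_mem_isBoolSub hp.1 hrel hr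
  · rintro ⟨hq, hBq, hr⟩
    refine ⟨hq, hB.symm ▸ hBq, ?_⟩
    have heq : p.1 ∆ q.1 = (p.1 ∆ p'.1) ∆ (p'.1 ∆ q.1) := by
      rw [symmDiff_assoc, symmDiff_symmDiff_cancel_left]
    rw [heq]
    refine symmDiff_mem_isBoolSub hp.1 hrel ?_
    rw [hB]
    exact hr

lemma sigma_eq_helper {n m : ℕ} {s₁ s₂ : Setoid (Fin n)} {h₁ : Nat.card (Quotient s₁) = m}
    {h₂ : Nat.card (Quotient s₂) = m} {c₁ c₂ : Finset (Fin n)}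
    {p₁ : ∀ t ∈ TrF s₁, t ∉ c₁} {p₂ : ∀ t ∈ TrF s₂, t ∉ c₂}
    (hs : s₁ = s₂) (hc : c₁ = c₂) :
    (⟨⟨s₁, h₁⟩, ⟨c₁, p₁⟩⟩ : Σ s : {s : Setoid (Fin n) // Nat.card (Quotient s) = m},
      {c : Finset (Fin n) // ∀ t ∈ TrF s.1, t ∉ c}) = ⟨⟨s₂, h₂⟩, ⟨c₂, p₂⟩⟩ := by
  subst hs; subst hc; rfl

noncomputable def bigEquiv (n m : ℕ) :
    ↥(bigT n m) ≃ Σ s : {s : Setoid (Fin n) // Nat.card (Quotient s) = m},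
      {c : Finset (Fin n) // ∀ t ∈ TrF s.1, t ∉ c} where
  toFun Sh :=
    ⟨⟨setoidOf (Classical.choose Sh.2).2, good_card (Classical.choose_spec Sh.2).1⟩,
      ⟨NmF (setoidOf (Classical.choose Sh.2).2) (Classical.choose Sh.2).1,
        NmF_avoids _ _⟩⟩
  invFun x :=
    ⟨clS n m (x.2.1, satB x.1.1),
      ⟨(x.2.1, satB x.1.1),
        ⟨isBoolSub_satB x.1.1, by rw [ncard_atomsOf_satB]; exact x.1.2⟩, rfl⟩⟩
  left_inv := by
    rintro ⟨S, hS⟩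
    have hp := Classical.choose_spec hS
    set p := Classical.choose hS with hpdef
    apply Subtype.ext
    show clS n m (NmF (setoidOf p.2) p.1, satB (setoidOf p.2)) = S
    rw [hp.2]
    have hsat : satB (setoidOf p.2) = p.2 := satB_setoidOf hp.1.1
    have hgood : Good n m (NmF (setoidOf p.2) p.1, satB (setoidOf p.2)) :=
      ⟨by rw [hsat]; exact hp.1.1, by rw [hsat]; exact hp.1.2⟩
    refine clS_eq hgood (by rw [hsat]) ?_
    show NmF (setoidOf p.2) p.1 ∆ p.1 ∈ satB (setoidOf p.2)
    rw [symmDiff_comm]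
    exact symmDiff_NmF_mem _ _
  right_inv := by
    rintro ⟨⟨s, hs⟩, ⟨c, hc⟩⟩
    have hgood : Good n m (c, satB s) :=
      ⟨isBoolSub_satB s, by rw [ncard_atomsOf_satB]; exact hs⟩
    set S₀ := clS n m (c, satB s) with hS₀def
    have hmem : S₀ ∈ bigT n m := ⟨(c, satB s), hgood, rfl⟩
    have hp := Classical.choose_spec hmem
    set p := Classical.choose hmem with hpdef
    have hself : (c, satB s) ∈ S₀ := self_mem_clS hgood
    rw [hp.2] at hself
    obtain ⟨-, hB, hrel⟩ := hself
    have hsB : setoidOf p.2 = s := by rw [hB]; exact setoidOf_satB s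
    show (⟨⟨setoidOf (Classical.choose hmem).2, _⟩,
      ⟨NmF (setoidOf (Classical.choose hmem).2) (Classical.choose hmem).1, _⟩⟩ :
      Σ s : {s : Setoid (Fin n) // Nat.card (Quotient s) = m},
        {c : Finset (Fin n) // ∀ t ∈ TrF s.1, t ∉ c}) = ⟨⟨s, hs⟩, ⟨c, hc⟩⟩
    refine sigma_eq_helper hsB ?_
    rw [hsB]
    have h1 : NmF s p.1 = NmF s c := by
      apply NmF_eq_of_rel
      have : p.1 ∆ c ∈ p.2 := hrel
      rwa [hB] at this
    rw [h1]
    exact NmF_fixed hc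

lemma fiber_card (n m : ℕ) {s : Setoid (Fin n)} (hs : Nat.card (Quotient s) = m) :
    Nat.card {c : Finset (Fin n) // ∀ t ∈ TrF s, t ∉ c} = 2 ^ (n - m) := by
  have e : {c : Finset (Fin n) // ∀ t ∈ TrF s, t ∉ c} ≃ ↥((TrF s)ᶜ.powerset) := by
    refine Equiv.subtypeEquivRight ?_
    intro c
    rw [Finset.mem_powerset]
    constructor
    · intro h x hx
      rw [Finset.mem_compl]
      intro hxT
      exact h x hxT hx
    · intro h t ht htc
      exact (Finset.mem_compl.1 (h htc)) ht
  rw [Nat.card_congr e, Nat.card_eq_fintype_card, Fintype.card_coe, Finset.card_powerset,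
    Finset.card_compl, card_TrF, hs, Fintype.card_fin]


/-- The number of equivalence classes of pairs `(c, B)`, with `B` a Boolean
subalgebra of `Finset (Fin n)` with `m` atoms and `c : Finset (Fin n)`, under
`(c, B) ~ (c', B')` iff `B = B'` and `c Δ c' ∈ B`, is `2^{n-m} S(n,m)`. -/
theorem count_located_subalgebras (n m : ℕ) (h1 : 1 ≤ m) (h2 : m ≤ n) :
    ({S : Set (Finset (Fin n) × Set (Finset (Fin n))) |
        ∃ p : Finset (Fin n) × Set (Finset (Fin n)),
          (IsBoolSub p.2 ∧ (atomsOf p.2).ncard = m) ∧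
            S = {q | (IsBoolSub q.2 ∧ (atomsOf q.2).ncard = m) ∧
                  p.2 = q.2 ∧ p.1 ∆ q.1 ∈ p.2}}).ncard =
      2 ^ (n - m) * stirling2 n m := by
  have hset : ({S : Set (Finset (Fin n) × Set (Finset (Fin n))) |
        ∃ p : Finset (Fin n) × Set (Finset (Fin n)),
          (IsBoolSub p.2 ∧ (atomsOf p.2).ncard = m) ∧
            S = {q | (IsBoolSub q.2 ∧ (atomsOf q.2).ncard = m) ∧
                  p.2 = q.2 ∧ p.1 ∆ q.1 ∈ p.2}}) = bigT n m := rfl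
  rw [hset, ← Nat.card_coe_set_eq, Nat.card_congr (bigEquiv n m)]
  rw [Nat.card_congr ((Equiv.sigmaCongrRight
    (fun t => Finite.equivFinOfCardEq (fiber_card n m t.2))).trans (Equiv.sigmaEquivProd _ _))]
  rw [Nat.card_prod, card_setoids, Nat.card_eq_fintype_card, Fintype.card_fin, mul_comm]
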